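/- Let a ∈ Δ_m and b ∈ Δ_n be weight vectors and let U(a, b) be the transport polytope. Every extreme point of U(a, b) has at most m + n − 1 nonzero entries. Consequently, for any cost matrix D, there exists an optimal transport plan P* minimizing ⟨P, D⟩ over U(a,b) that is sparse, with at most m + n − 1 nonzero entries. -/

import Mathlib

open Finset

/-- Extension by zero of a function on a finset. -/
private def extZero {ι : Type*} [DecidableEq ι] (S : Finset ι) : (↥S → ℝ) →ₗ[ℝ] (ι → ℝ) where
  toFun f q := if h : q ∈ S then f ⟨q, h⟩ else 0
  map_add' f g := by funext q; by_cases h : q ∈ S <;> simp [h]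
  map_smul' c f := by funext q; by_cases h : q ∈ S <;> simp [h]

/-- Row and column sums of a function on `Fin m × Fin n`. -/
private def sumsMap (m n : ℕ) : (Fin m × Fin n → ℝ) →ₗ[ℝ] (Fin m → ℝ) × (Fin n → ℝ) where
  toFun C := (fun i => ∑ j, C (i, j), fun j => ∑ i, C (i, j))
  map_add' C D := by
    refine Prod.ext ?_ ?_ <;> funext x <;> simp [Finset.sum_add_distrib]
  map_smul' c C := by
    refine Prod.ext ?_ ?_ <;> funext x <;> simp [Finset.mul_sum]

/-- The "total mass imbalance" functional. -/
private def imbal (m n : ℕ) : ((Fin m → ℝ) × (Fin n → ℝ)) →ₗ[ℝ] ℝ where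
  toFun p := (∑ i, p.1 i) - ∑ j, p.2 j
  map_add' p q := by simp [Finset.sum_add_distrib]; ring
  map_smul' c p := by simp [Finset.mul_sum, mul_sub]

private lemma exists_balanced {m n : ℕ} (hm : 0 < m) (S : Finset (Fin m × Fin n))
    (hS : m + n ≤ S.card) :
    ∃ C : Fin m × Fin n → ℝ, C ≠ 0 ∧ (∀ q, q ∉ S → C q = 0) ∧
      (∀ i, ∑ j, C (i, j) = 0) ∧ (∀ j, ∑ i, C (i, j) = 0) := by
  classical
  set T := (sumsMap m n).comp (extZero S) with hT
  set g := imbal m n with hg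
  have hrange : LinearMap.range T ≤ LinearMap.ker g := by
    rintro _ ⟨f, rfl⟩
    simp only [LinearMap.mem_ker, hT, hg, LinearMap.comp_apply, sumsMap, imbal,
      LinearMap.coe_mk, AddHom.coe_mk, sub_eq_zero]
    exact Finset.sum_comm' (by simp)
  -- finrank of ker g is at most m + n - 1
  have hgfr : Module.finrank ℝ (LinearMap.range g) + Module.finrank ℝ (LinearMap.ker g)
      = Module.finrank ℝ ((Fin m → ℝ) × (Fin n → ℝ)) :=
    LinearMap.finrank_range_add_finrank_ker g
  have hdom : Module.finrank ℝ ((Fin m → ℝ) × (Fin n → ℝ)) = m + n := by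
    simp [Module.finrank_prod, Module.finrank_fintype_fun_eq_card]
  have hgne : LinearMap.range g ≠ ⊥ := by
    intro h
    have h1 : g ((fun _ => (1 : ℝ)), fun _ => 0) = m := by
      simp [hg, imbal]
    have h2 : g ((fun _ => (1 : ℝ)), fun _ => 0) ∈ LinearMap.range g :=
      LinearMap.mem_range_self _ _
    rw [h, Submodule.mem_bot] at h2
    rw [h2] at h1
    exact_mod_cast absurd h1.symm (by positivity)
  have hgpos : 0 < Module.finrank ℝ (LinearMap.range g) := by
    rw [Module.finrank_pos_iff]
    exact Submodule.nontrivial_iff_ne_bot.mpr hgne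
  have hker_g : Module.finrank ℝ (LinearMap.ker g) ≤ m + n - 1 := by omega
  -- finrank of ker T is positive
  have hTfr : Module.finrank ℝ (LinearMap.range T) + Module.finrank ℝ (LinearMap.ker T)
      = Module.finrank ℝ (↥S → ℝ) :=
    LinearMap.finrank_range_add_finrank_ker T
  have hdomT : Module.finrank ℝ (↥S → ℝ) = S.card := by
    rw [Module.finrank_fintype_fun_eq_card, Fintype.card_coe]
  have hrle : Module.finrank ℝ (LinearMap.range T) ≤ Module.finrank ℝ (LinearMap.ker g) :=
    Submodule.finrank_mono hrange
  have hkerpos : 0 < Module.finrank ℝ (LinearMap.ker T) := by omega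
  have hkerne : LinearMap.ker T ≠ ⊥ := by
    intro h
    rw [h, finrank_bot] at hkerpos
    exact lt_irrefl 0 hkerpos
  obtain ⟨f, hfker, hfne⟩ := Submodule.ne_bot_iff _ |>.mp hkerne
  refine ⟨extZero S f, ?_, ?_, ?_, ?_⟩
  · intro h
    apply hfne
    funext s
    have := congrFun h s.val
    simpa [extZero, s.prop] using this
  · intro q hq
    simp [extZero, hq]
  · intro i
    have := congrFun (congrArg Prod.fst (LinearMap.mem_ker.mp hfker)) i
    simpa [hT, sumsMap] using this
  · intro j
    have := congrFun (congrArg Prod.snd (LinearMap.mem_ker.mp hfker)) j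
    simpa [hT, sumsMap] using this

/-- Every extreme point of the transport polytope `U(a, b)` has at most
`m + n - 1` nonzero entries; consequently, for any cost matrix `D` there exists an optimal
transport plan minimizing `⟨P, D⟩` over `U(a, b)` with at most `m + n - 1` nonzero entries. -/
theorem transport_polytope_extreme_points_sparse {m n : ℕ}
    (a : Fin m → ℝ) (b : Fin n → ℝ)
    (ha0 : ∀ i, 0 ≤ a i) (hb0 : ∀ j, 0 ≤ b j)
    (ha1 : ∑ i, a i = 1) (hb1 : ∑ j, b j = 1)
    (U : Set (Matrix (Fin m) (Fin n) ℝ))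
    (hU : U = {P | (∀ i j, 0 ≤ P i j) ∧ (∀ i, ∑ j, P i j = a i) ∧ (∀ j, ∑ i, P i j = b j)}) :
    (∀ P ∈ Set.extremePoints ℝ U,
      {q : Fin m × Fin n | P q.1 q.2 ≠ 0}.ncard ≤ m + n - 1) ∧
    ∀ D : Matrix (Fin m) (Fin n) ℝ, ∃ Pstar ∈ U,
      (∀ Q ∈ U, ∑ i, ∑ j, Pstar i j * D i j ≤ ∑ i, ∑ j, Q i j * D i j) ∧
      {q : Fin m × Fin n | Pstar q.1 q.2 ≠ 0}.ncard ≤ m + n - 1 := by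
  classical
  have hm : 0 < m := by
    rcases Nat.eq_zero_or_pos m with h | h
    · subst h; simp at ha1
    · exact h
  have hn : 0 < n := by
    rcases Nat.eq_zero_or_pos n with h | h
    · subst h; simp at hb1
    · exact h
  -- Part 1
  have key : ∀ P ∈ Set.extremePoints ℝ U,
      {q : Fin m × Fin n | P q.1 q.2 ≠ 0}.ncard ≤ m + n - 1 := by
    intro P hP
    by_contra hcard
    push_neg at hcard
    set s := {q : Fin m × Fin n | P q.1 q.2 ≠ 0} with hs
    have hsfin : s.Finite := Set.toFinite s
    have hScard : m + n ≤ hsfin.toFinset.card := by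
      have := Set.ncard_eq_toFinset_card s hsfin
      omega
    set S := hsfin.toFinset with hSdef
    obtain ⟨C, hC0, hCsupp, hCrow, hCcol⟩ := exists_balanced hm S hScard
    obtain ⟨hPU, hPext⟩ := hP
    rw [hU] at hPU
    obtain ⟨hP0, hPr, hPc⟩ := hPU
    have hSne : S.Nonempty := Finset.card_pos.mp (by omega)
    set δ := S.inf' hSne (fun q => P q.1 q.2) with hδ
    have hδpos : 0 < δ := by
      rw [hδ, Finset.lt_inf'_iff]
      intro q hq
      have hq' : P q.1 q.2 ≠ 0 := by
        rw [hSdef, Set.Finite.mem_toFinset] at hq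
        exact hq
      exact lt_of_le_of_ne (hP0 _ _) (Ne.symm hq')
    set M := S.sup' hSne (fun q => |C q|) with hM
    obtain ⟨q₀, hq₀⟩ : ∃ q, C q ≠ 0 := Function.ne_iff.mp hC0
    have hq₀S : q₀ ∈ S := by
      by_contra h
      exact hq₀ (hCsupp _ h)
    have hMpos : 0 < M :=
      lt_of_lt_of_le (abs_pos.mpr hq₀) (Finset.le_sup' (fun q => |C q|) hq₀S)
    set ε := δ / M with hε
    have hεpos : 0 < ε := div_pos hδpos hMpos
    have hbound : ∀ i j, ε * |C (i, j)| ≤ P i j := by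
      intro i j
      by_cases h : (i, j) ∈ S
      · calc ε * |C (i, j)| ≤ ε * M :=
              mul_le_mul_of_nonneg_left (Finset.le_sup' (fun q => |C q|) h) hεpos.le
          _ = δ := div_mul_cancel₀ _ hMpos.ne'
          _ ≤ P i j := Finset.inf'_le _ h
      · rw [hCsupp _ h]
        simpa using hP0 i j
    set X : Matrix (Fin m) (Fin n) ℝ := fun i j => P i j + ε * C (i, j) with hX
    set Y : Matrix (Fin m) (Fin n) ℝ := fun i j => P i j - ε * C (i, j) with hY
    have habs : ∀ i j, |ε * C (i, j)| ≤ P i j := by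
      intro i j
      rw [abs_mul, abs_of_pos hεpos]
      exact hbound i j
    have hXU : X ∈ U := by
      rw [hU]
      refine ⟨fun i j => ?_, fun i => ?_, fun j => ?_⟩
      · have h1 := (abs_le.mp (habs i j)).1
        simp only [hX]
        linarith
      · simp only [hX]
        rw [Finset.sum_add_distrib, ← Finset.mul_sum, hCrow i, hPr i, mul_zero, add_zero]
      · simp only [hX]
        rw [Finset.sum_add_distrib, ← Finset.mul_sum, hCcol j, hPc j, mul_zero, add_zero]
    have hYU : Y ∈ U := by
      rw [hU]
      refine ⟨fun i j => ?_, fun i => ?_, fun j => ?_⟩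
      · have h1 := (abs_le.mp (habs i j)).2
        simp only [hY]
        linarith
      · simp only [hY]
        rw [Finset.sum_sub_distrib, ← Finset.mul_sum, hCrow i, hPr i, mul_zero, sub_zero]
      · simp only [hY]
        rw [Finset.sum_sub_distrib, ← Finset.mul_sum, hCcol j, hPc j, mul_zero, sub_zero]
    have hmem : P ∈ openSegment ℝ X Y := by
      have hc : ((1:ℝ)/2) • X + ((1:ℝ)/2) • Y = P := by
        funext i j
        have hh : (((1:ℝ)/2) • X + ((1:ℝ)/2) • Y) i j
            = ((1:ℝ)/2) * X i j + ((1:ℝ)/2) * Y i j := rfl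
        rw [hh]
        simp only [hX, hY]
        ring
      exact ⟨(1:ℝ)/2, (1:ℝ)/2, by norm_num, by norm_num, by norm_num, hc⟩
    have hXP : X = P := hPext hXU hYU hmem
    have : P q₀.1 q₀.2 + ε * C q₀ = P q₀.1 q₀.2 := by
      have := congrFun (congrFun hXP q₀.1) q₀.2
      simpa [hX] using this
    have hzero : ε * C q₀ = 0 := by linarith
    exact (mul_ne_zero hεpos.ne' hq₀) hzero
  refine ⟨key, ?_⟩
  -- Part 2
  intro D
  letI : LocallyConvexSpace ℝ (Matrix (Fin m) (Fin n) ℝ) :=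
    inferInstanceAs (LocallyConvexSpace ℝ (Fin m → Fin n → ℝ))
  letI : IsTopologicalAddGroup (Matrix (Fin m) (Fin n) ℝ) :=
    inferInstanceAs (IsTopologicalAddGroup (Fin m → Fin n → ℝ))
  set φ : Matrix (Fin m) (Fin n) ℝ → ℝ := fun P => ∑ i, ∑ j, P i j * D i j with hφ
  have heval : ∀ (i : Fin m) (j : Fin n),
      Continuous (fun P : Matrix (Fin m) (Fin n) ℝ => P i j) := fun i j =>
    (continuous_apply j).comp (continuous_apply (A := fun _ : Fin m => Fin n → ℝ) i)
  have hφcont : Continuous φ := by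
    apply continuous_finset_sum
    intro i _
    apply continuous_finset_sum
    intro j _
    exact (heval i j).mul continuous_const
  have hUclosed : IsClosed U := by
    have hrw : U = (⋂ i, ⋂ j, {P : Matrix (Fin m) (Fin n) ℝ | 0 ≤ P i j}) ∩
        ((⋂ i, {P : Matrix (Fin m) (Fin n) ℝ | ∑ j, P i j = a i}) ∩
         (⋂ j, {P : Matrix (Fin m) (Fin n) ℝ | ∑ i, P i j = b j})) := by
      rw [hU]
      ext P
      simp only [Set.mem_setOf_eq, Set.mem_inter_iff, Set.mem_iInter]
    rw [hrw]
    refine IsClosed.inter ?_ (IsClosed.inter ?_ ?_)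
    · exact isClosed_iInter fun i => isClosed_iInter fun j =>
        isClosed_le continuous_const (heval i j)
    · exact isClosed_iInter fun i =>
        isClosed_eq (continuous_finset_sum _ fun j _ => heval i j) continuous_const
    · exact isClosed_iInter fun j =>
        isClosed_eq (continuous_finset_sum _ fun i _ => heval i j) continuous_const
  have hK : IsCompact (Set.pi Set.univ
      (fun _ : Fin m => Set.pi Set.univ fun _ : Fin n => Set.Icc (0:ℝ) 1) :
      Set (Matrix (Fin m) (Fin n) ℝ)) :=
    isCompact_univ_pi fun _ => isCompact_univ_pi fun _ => isCompact_Icc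
  have hUK : U ⊆ (Set.pi Set.univ
      (fun _ : Fin m => Set.pi Set.univ fun _ : Fin n => Set.Icc (0:ℝ) 1) :
      Set (Matrix (Fin m) (Fin n) ℝ)) := by
    intro P hPU
    rw [hU] at hPU
    obtain ⟨hP0, hPr, _⟩ := hPU
    intro i _
    intro j _
    refine ⟨hP0 i j, ?_⟩
    have h1 : P i j ≤ a i := by
      rw [← hPr i]
      exact Finset.single_le_sum (fun j _ => hP0 i j) (Finset.mem_univ j)
    have h2 : a i ≤ 1 := by
      rw [← ha1]
      exact Finset.single_le_sum (fun i _ => ha0 i) (Finset.mem_univ i)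
    exact h1.trans h2
  have hUcomp : IsCompact U := hK.of_isClosed_subset hUclosed hUK
  have hUne : U.Nonempty := by
    refine ⟨fun i j => a i * b j, ?_⟩
    rw [hU]
    refine ⟨fun i j => mul_nonneg (ha0 i) (hb0 j), fun i => ?_, fun j => ?_⟩
    · rw [← Finset.mul_sum, hb1, mul_one]
    · rw [← Finset.sum_mul, ha1, one_mul]
  obtain ⟨Pmin, hPminU, hmin⟩ := hUcomp.exists_isMinOn hUne hφcont.continuousOn
  have hPminle : ∀ Q ∈ U, φ Pmin ≤ φ Q := fun Q hQ => hmin hQ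
  set F := {P ∈ U | φ P ≤ φ Pmin} with hF
  have hFsub : F ⊆ U := fun P hP => hP.1
  have hFne : F.Nonempty := ⟨Pmin, hPminU, le_refl _⟩
  have hFclosed : IsClosed F := by
    have : F = U ∩ φ ⁻¹' Set.Iic (φ Pmin) := rfl
    rw [this]
    exact hUclosed.inter (isClosed_Iic.preimage hφcont)
  have hFcomp : IsCompact F := hUcomp.of_isClosed_subset hFclosed hFsub
  -- φ is affine on segments
  have hφlin : ∀ (t u : ℝ) (Xx Yy : Matrix (Fin m) (Fin n) ℝ),
      φ (t • Xx + u • Yy) = t * φ Xx + u * φ Yy := by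
    intro t u Xx Yy
    simp only [hφ, Finset.mul_sum]
    rw [← Finset.sum_add_distrib]
    refine Finset.sum_congr rfl fun i _ => ?_
    rw [← Finset.sum_add_distrib]
    refine Finset.sum_congr rfl fun j _ => ?_
    have : (t • Xx + u • Yy) i j = t * Xx i j + u * Yy i j := rfl
    rw [this]
    ring
  have hFextreme : IsExtreme ℝ U F := by
    refine ⟨hFsub, ?_⟩
    intro x₁ hx₁ x₂ hx₂ x hxF hxseg
    obtain ⟨t, u, ht, hu, htu, hcomb⟩ := hxseg
    have h1 : φ Pmin ≤ φ x₁ := hPminle x₁ hx₁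
    have h2 : φ Pmin ≤ φ x₂ := hPminle x₂ hx₂
    have h3 : φ x ≤ φ Pmin := hxF.2
    have h4 : φ x = t * φ x₁ + u * φ x₂ := by
      rw [← hcomb]; exact (hφlin t u x₁ x₂)
    have hsplit : φ Pmin = t * φ Pmin + u * φ Pmin := by rw [← add_mul, htu, one_mul]
    · refine ⟨hx₁, ?_⟩
      by_contra hlt
      push_neg at hlt
      have ha' := mul_lt_mul_of_pos_left hlt ht
      have hb' := mul_le_mul_of_nonneg_left h2 hu.le
      linarith
  obtain ⟨Pstar, hPstarF⟩ := hFcomp.extremePoints_nonempty hFne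
  have hPstarU : Pstar ∈ Set.extremePoints ℝ U :=
    hFextreme.extremePoints_subset_extremePoints hPstarF
  have hPstarFmem : Pstar ∈ F := hPstarF.1
  refine ⟨Pstar, hPstarFmem.1, fun Q hQ => ?_, key Pstar hPstarU⟩
  exact le_trans hPstarFmem.2 (hPminle Q hQ)
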